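/- Let n ≥ 2 and m ≥ 1 be integers and let P(t) = (-1)^{n-1} + Σ_{i=1}^{n-1}(-1)^{n-i-1}(t^i+t^{-i}) - Σ_{k=1}^{m}(t^{n+3k-2}+t^{-(n+3k-2)}) + Σ_{k=1}^{m}(t^{n+3k-1}+t^{-(n+3k-1)}) be the symmetrized Alexander polynomial of K_{n,m}, with coefficients a_j (so P(t) = Σ_j a_j t^j). Define the torsion coefficients t_i = Σ_{j>0} j·a_{|i|+j}. Then for 0 ≤ i ≤ n-2: t_i = m + (n-i)/2 if n-i is even, and t_i = m + (n-i-1)/2 if n-i is odd; and for i = n+3k+ε with ε ∈ {-1,0,1} and 0 ≤ k ≤ m-1: t_i = m-k. -/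

import Mathlib

open LaurentPolynomial Finset

private lemma lp_add_apply (p q : LaurentPolynomial ℤ) (x : ℤ) : (p + q).coeff x = p.coeff x + q.coeff x := rfl
private lemma lp_sub_apply (p q : LaurentPolynomial ℤ) (x : ℤ) : (p - q).coeff x = p.coeff x - q.coeff x := rfl
private lemma lp_sum_apply {ι : Type*} (s : Finset ι) (f : ι → LaurentPolynomial ℤ) (x : ℤ) :
    (∑ i ∈ s, f i).coeff x = ∑ i ∈ s, (f i).coeff x := by
    rw [AddMonoidAlgebra.coeff_sum, Finsupp.finset_sum_apply]
private lemma lp_C_mul_apply (r : ℤ) (f : LaurentPolynomial ℤ) (y : ℤ) :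
    (C r * f).coeff y = r * f.coeff y := AddMonoidAlgebra.coeff_single_zero_mul f r y

/-- alternating sum `∑_{j=1}^{L} (-1)^{L-j} j = ⌈L/2⌉`, shifted by `c`. -/
private lemma altsum (L c : ℕ) :
    ∑ i' ∈ Icc 1 (c + L), (-1:ℤ)^(c + L - i') * (if (c:ℤ) < (i':ℤ) then (i':ℤ) - (c:ℤ) else 0)
      = (((L+1)/2 : ℕ) : ℤ) := by
  induction L with
  | zero =>
    rw [Finset.sum_eq_zero]
    · simp
    · intro x hx
      simp only [mem_Icc] at hx
      rw [if_neg (by omega), mul_zero]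
  | succ L ih =>
    rw [show c + (L+1) = (c+L)+1 by omega, Finset.sum_Icc_succ_top (by omega)]
    have h1 : ∀ i' ∈ Icc 1 (c+L), (-1:ℤ)^(c + L + 1 - i') * (if (c:ℤ) < (i':ℤ) then (i':ℤ) - (c:ℤ) else 0)
        = -((-1:ℤ)^(c + L - i') * (if (c:ℤ) < (i':ℤ) then (i':ℤ) - (c:ℤ) else 0)) := by
      intro i' hi'
      simp only [mem_Icc] at hi'
      rw [show c + L + 1 - i' = (c + L - i') + 1 by omega, pow_succ]
      ring
    rw [Finset.sum_congr rfl h1, Finset.sum_neg_distrib, ih]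
    rw [show c + L + 1 - (c + L + 1) = 0 by omega, pow_zero, if_pos (by push_cast; omega)]
    push_cast
    omega

private lemma indsum (m : ℕ) (k : ℤ) (hk0 : 0 ≤ k) (hkm : k ≤ (m:ℤ) - 1) :
    ∑ k' ∈ Icc 1 m, (if k + 1 ≤ (k':ℤ) then (1:ℤ) else 0) = (m:ℤ) - k := by
  rw [← Finset.sum_filter]
  have : Finset.filter (fun k' : ℕ => k + 1 ≤ (k':ℤ)) (Icc 1 m) = Icc (k.toNat + 1) m := by
    ext x
    simp only [mem_filter, mem_Icc]
    omega
  rw [this, Finset.sum_const, Nat.card_Icc, nsmul_eq_mul, mul_one]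
  omega

/-- Torsion coefficients of the symmetrized Alexander polynomial of `K_{n,m}`:
with `P` as below, `a j` its coefficient of `t^j`, and
`t_i = Σ_{j>0} j·a_{|i|+j}`, for `0 ≤ i ≤ n-2` we have `t_i = m + (n-i)/2` when
`n-i` is even and `t_i = m + (n-i-1)/2` when `n-i` is odd, while for
`i = n+3k+ε`, `ε ∈ {-1,0,1}`, `0 ≤ k ≤ m-1`, we have `t_i = m-k`. -/
theorem stmt_13 (n m : ℕ) (hn : 2 ≤ n) (hm : 1 ≤ m)
    (P : LaurentPolynomial ℤ)
    (hP : P = ((-1 : LaurentPolynomial ℤ)) ^ (n - 1)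
        + ∑ i ∈ Icc 1 (n - 1), (-1 : LaurentPolynomial ℤ) ^ (n - i - 1) *
            (T (i : ℤ) + T (-(i : ℤ)))
        - ∑ k ∈ Icc 1 m, (T ((n : ℤ) + 3 * k - 2) + T (-((n : ℤ) + 3 * k - 2)))
        + ∑ k ∈ Icc 1 m, (T ((n : ℤ) + 3 * k - 1) + T (-((n : ℤ) + 3 * k - 1))))
    (a : ℤ → ℤ) (ha : ∀ j, a j = P.coeff j)
    (tor : ℤ → ℤ)
    (htor : ∀ i, tor i = ∑ j ∈ Icc (1 : ℤ) ((n : ℤ) + 3 * m), j * a (|i| + j)) :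
    (∀ i : ℤ, 0 ≤ i → i ≤ (n : ℤ) - 2 →
      (Even ((n : ℤ) - i) → tor i = m + ((n : ℤ) - i) / 2) ∧
      (Odd ((n : ℤ) - i) → tor i = m + ((n : ℤ) - i - 1) / 2)) ∧
    (∀ k ε : ℤ, 0 ≤ k → k ≤ (m : ℤ) - 1 → ε ∈ ({-1, 0, 1} : Set ℤ) →
      tor ((n : ℤ) + 3 * k + ε) = m - k) := by
  have hC : ∀ e : ℕ, ((-1 : LaurentPolynomial ℤ))^e = C ((-1:ℤ)^e) := by
    intro e; rw [map_pow, map_neg, map_one]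
  -- pointwise value of P
  have happ : ∀ x : ℤ, P.coeff x = (if x = 0 then (-1:ℤ)^(n-1) else 0)
      + (∑ i' ∈ Icc 1 (n-1), (-1:ℤ)^(n-i'-1) *
          ((if (i':ℤ) = x then (1:ℤ) else 0) + (if (-(i':ℤ)) = x then (1:ℤ) else 0)))
      - (∑ k' ∈ Icc 1 m, ((if ((n:ℤ)+3*k'-2) = x then (1:ℤ) else 0)
          + (if (-((n:ℤ)+3*k'-2)) = x then (1:ℤ) else 0)))
      + (∑ k' ∈ Icc 1 m, ((if ((n:ℤ)+3*k'-1) = x then (1:ℤ) else 0)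
          + (if (-((n:ℤ)+3*k'-1)) = x then (1:ℤ) else 0))) := by
    intro x
    rw [hP]
    simp only [hC, lp_add_apply, lp_sub_apply, lp_sum_apply, lp_C_mul_apply, T_apply, C_apply]
  -- the inner sum over j for a single `T s`
  have hinner : ∀ (i0 s : ℤ),
      ∑ j ∈ Icc (1:ℤ) ((n:ℤ)+3*m), j * (if s = i0 + j then (1:ℤ) else 0)
        = if 1 ≤ s - i0 ∧ s - i0 ≤ (n:ℤ)+3*m then s - i0 else 0 := by
    intro i0 s
    have h1 : ∀ j ∈ Icc (1:ℤ) ((n:ℤ)+3*m),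
        j * (if s = i0 + j then (1:ℤ) else 0) = if j = s - i0 then id j else 0 := by
      intro j _
      rcases eq_or_ne j (s - i0) with h | h
      · rw [if_pos h, if_pos (by omega), mul_one, h]; rfl
      · rw [if_neg h, if_neg (by omega), mul_zero]
    rw [Finset.sum_congr rfl h1, Finset.sum_ite_eq' (Icc (1:ℤ) ((n:ℤ)+3*m)) (s - i0) id]
    simp only [mem_Icc, id_eq]
  -- combined pair: the negative exponent never contributes for i0 ≥ 0, s ≥ 0
  have hpair : ∀ (i0 s : ℤ), 0 ≤ i0 → 0 ≤ s →
      ∑ j ∈ Icc (1:ℤ) ((n:ℤ)+3*m),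
        j * ((if s = i0 + j then (1:ℤ) else 0) + (if -s = i0 + j then (1:ℤ) else 0))
      = if 1 ≤ s - i0 ∧ s - i0 ≤ (n:ℤ)+3*m then s - i0 else 0 := by
    intro i0 s h0 hs
    simp only [mul_add]
    rw [Finset.sum_add_distrib, hinner i0 s, hinner i0 (-s),
      if_neg (show ¬(1 ≤ -s - i0 ∧ -s - i0 ≤ (n:ℤ)+3*m) by omega), add_zero]
  -- the master formula for tor
  have hfor : ∀ i0 : ℤ, 0 ≤ i0 → tor i0 =
      (∑ i' ∈ Icc 1 (n-1), (-1:ℤ)^(n-i'-1) *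
        (if 1 ≤ (i':ℤ) - i0 ∧ (i':ℤ) - i0 ≤ (n:ℤ)+3*m then (i':ℤ) - i0 else 0))
      - (∑ k' ∈ Icc 1 m, (if 1 ≤ ((n:ℤ)+3*(k':ℤ)-2) - i0 ∧ ((n:ℤ)+3*(k':ℤ)-2) - i0 ≤ (n:ℤ)+3*m
          then ((n:ℤ)+3*(k':ℤ)-2) - i0 else 0))
      + (∑ k' ∈ Icc 1 m, (if 1 ≤ ((n:ℤ)+3*(k':ℤ)-1) - i0 ∧ ((n:ℤ)+3*(k':ℤ)-1) - i0 ≤ (n:ℤ)+3*m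
          then ((n:ℤ)+3*(k':ℤ)-1) - i0 else 0)) := by
    intro i0 h0
    rw [htor, abs_of_nonneg h0]
    have hsplit : ∀ j ∈ Icc (1:ℤ) ((n:ℤ)+3*m), j * a (i0 + j)
        = j * (if i0 + j = 0 then (-1:ℤ)^(n-1) else 0)
          + j * (∑ i' ∈ Icc 1 (n-1), (-1:ℤ)^(n-i'-1) *
              ((if (i':ℤ) = i0 + j then (1:ℤ) else 0) + (if (-(i':ℤ)) = i0 + j then (1:ℤ) else 0)))
          - j * (∑ k' ∈ Icc 1 m, ((if ((n:ℤ)+3*k'-2) = i0 + j then (1:ℤ) else 0)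
              + (if (-((n:ℤ)+3*k'-2)) = i0 + j then (1:ℤ) else 0)))
          + j * (∑ k' ∈ Icc 1 m, ((if ((n:ℤ)+3*k'-1) = i0 + j then (1:ℤ) else 0)
              + (if (-((n:ℤ)+3*k'-1)) = i0 + j then (1:ℤ) else 0))) := by
      intro j _
      rw [ha, happ]
      ring
    rw [Finset.sum_congr rfl hsplit, Finset.sum_add_distrib, Finset.sum_sub_distrib,
      Finset.sum_add_distrib]
    have e1 : ∑ j ∈ Icc (1:ℤ) ((n:ℤ)+3*m),
        j * (if i0 + j = 0 then (-1:ℤ)^(n-1) else 0) = 0 := by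
      apply Finset.sum_eq_zero
      intro j hj
      simp only [mem_Icc] at hj
      rw [if_neg (by omega), mul_zero]
    have e2 : ∑ j ∈ Icc (1:ℤ) ((n:ℤ)+3*m),
        j * (∑ i' ∈ Icc 1 (n-1), (-1:ℤ)^(n-i'-1) *
            ((if (i':ℤ) = i0 + j then (1:ℤ) else 0) + (if (-(i':ℤ)) = i0 + j then (1:ℤ) else 0)))
        = ∑ i' ∈ Icc 1 (n-1), (-1:ℤ)^(n-i'-1) *
            (if 1 ≤ (i':ℤ) - i0 ∧ (i':ℤ) - i0 ≤ (n:ℤ)+3*m then (i':ℤ) - i0 else 0) := by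
      rw [Finset.sum_congr rfl (fun j _ => Finset.mul_sum _ _ _), Finset.sum_comm]
      refine Finset.sum_congr rfl fun i' _ => ?_
      rw [← hpair i0 (i':ℤ) h0 (by positivity), Finset.mul_sum]
      refine Finset.sum_congr rfl fun j _ => by ring
    have e3 : ∑ j ∈ Icc (1:ℤ) ((n:ℤ)+3*m),
        j * (∑ k' ∈ Icc 1 m, ((if ((n:ℤ)+3*k'-2) = i0 + j then (1:ℤ) else 0)
            + (if (-((n:ℤ)+3*k'-2)) = i0 + j then (1:ℤ) else 0)))
        = ∑ k' ∈ Icc 1 m, (if 1 ≤ ((n:ℤ)+3*(k':ℤ)-2) - i0 ∧ ((n:ℤ)+3*(k':ℤ)-2) - i0 ≤ (n:ℤ)+3*m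
            then ((n:ℤ)+3*(k':ℤ)-2) - i0 else 0) := by
      rw [Finset.sum_congr rfl (fun j _ => Finset.mul_sum _ _ _), Finset.sum_comm]
      refine Finset.sum_congr rfl fun k' hk' => ?_
      simp only [mem_Icc] at hk'
      rw [← hpair i0 ((n:ℤ)+3*(k':ℤ)-2) h0 (by omega)]
    have e4 : ∑ j ∈ Icc (1:ℤ) ((n:ℤ)+3*m),
        j * (∑ k' ∈ Icc 1 m, ((if ((n:ℤ)+3*k'-1) = i0 + j then (1:ℤ) else 0)
            + (if (-((n:ℤ)+3*k'-1)) = i0 + j then (1:ℤ) else 0)))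
        = ∑ k' ∈ Icc 1 m, (if 1 ≤ ((n:ℤ)+3*(k':ℤ)-1) - i0 ∧ ((n:ℤ)+3*(k':ℤ)-1) - i0 ≤ (n:ℤ)+3*m
            then ((n:ℤ)+3*(k':ℤ)-1) - i0 else 0) := by
      rw [Finset.sum_congr rfl (fun j _ => Finset.mul_sum _ _ _), Finset.sum_comm]
      refine Finset.sum_congr rfl fun k' hk' => ?_
      simp only [mem_Icc] at hk'
      rw [← hpair i0 ((n:ℤ)+3*(k':ℤ)-1) h0 (by omega)]
    rw [e1, e2, e3, e4, zero_add]
  constructor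
  · -- range 0 ≤ i ≤ n - 2
    intro i h0 h2
    have key := hfor i h0
    have hS2 : (∑ k' ∈ Icc 1 m, (if 1 ≤ ((n:ℤ)+3*(k':ℤ)-2) - i ∧ ((n:ℤ)+3*(k':ℤ)-2) - i ≤ (n:ℤ)+3*m
        then ((n:ℤ)+3*(k':ℤ)-2) - i else 0)) = ∑ k' ∈ Icc 1 m, (((n:ℤ)+3*(k':ℤ)-2) - i) := by
      refine Finset.sum_congr rfl fun k' hk' => ?_
      simp only [mem_Icc] at hk'
      rw [if_pos (by omega)]
    have hS3 : (∑ k' ∈ Icc 1 m, (if 1 ≤ ((n:ℤ)+3*(k':ℤ)-1) - i ∧ ((n:ℤ)+3*(k':ℤ)-1) - i ≤ (n:ℤ)+3*m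
        then ((n:ℤ)+3*(k':ℤ)-1) - i else 0)) = ∑ k' ∈ Icc 1 m, (((n:ℤ)+3*(k':ℤ)-1) - i) := by
      refine Finset.sum_congr rfl fun k' hk' => ?_
      simp only [mem_Icc] at hk'
      rw [if_pos (by omega)]
    have hc : (i.toNat : ℤ) = i := Int.toNat_of_nonneg h0
    have hS1 : (∑ i' ∈ Icc 1 (n-1), (-1:ℤ)^(n-i'-1) *
        (if 1 ≤ (i':ℤ) - i ∧ (i':ℤ) - i ≤ (n:ℤ)+3*m then (i':ℤ) - i else 0))
        = (((n - 1 - i.toNat + 1)/2 : ℕ) : ℤ) := by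
      have halt := altsum (n - 1 - i.toNat) i.toNat
      rw [show i.toNat + (n - 1 - i.toNat) = n - 1 by omega] at halt
      rw [← halt]
      refine Finset.sum_congr rfl fun i' hi' => ?_
      simp only [mem_Icc] at hi'
      rw [show n - i' - 1 = n - 1 - i' by omega]
      congr 1
      split_ifs <;> omega
    have h23 : (∑ k' ∈ Icc 1 m, (((n:ℤ)+3*(k':ℤ)-1) - i))
        - (∑ k' ∈ Icc 1 m, (((n:ℤ)+3*(k':ℤ)-2) - i)) = m := by
      rw [← Finset.sum_sub_distrib]
      have hone : ∀ k' ∈ Icc 1 m,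
          ((n:ℤ)+3*(k':ℤ)-1 - i) - ((n:ℤ)+3*(k':ℤ)-2 - i) = 1 := fun k' _ => by ring
      rw [Finset.sum_congr rfl hone, Finset.sum_const, Nat.card_Icc, nsmul_eq_mul, mul_one]
      omega
    have hval : tor i = (((n - 1 - i.toNat + 1)/2 : ℕ) : ℤ) + (m:ℤ) := by
      rw [key, hS1, hS2, hS3]
      linarith [h23]
    constructor
    · intro hev
      rw [Int.even_iff] at hev
      omega
    · intro hod
      rw [Int.odd_iff] at hod
      omega
  · -- range i = n + 3k + ε
    intro k ε hk0 hk1 hε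
    have hε' : ε = -1 ∨ ε = 0 ∨ ε = 1 := by simpa using hε
    have hεb : -1 ≤ ε ∧ ε ≤ 1 := by rcases hε' with h|h|h <;> omega
    have h0 : 0 ≤ (n:ℤ) + 3*k + ε := by omega
    have key := hfor _ h0
    have hS1 : (∑ i' ∈ Icc 1 (n-1), (-1:ℤ)^(n-i'-1) *
        (if 1 ≤ (i':ℤ) - ((n:ℤ)+3*k+ε) ∧ (i':ℤ) - ((n:ℤ)+3*k+ε) ≤ (n:ℤ)+3*m
          then (i':ℤ) - ((n:ℤ)+3*k+ε) else 0)) = 0 := by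
      apply Finset.sum_eq_zero
      intro i' hi'
      simp only [mem_Icc] at hi'
      rw [if_neg (by omega), mul_zero]
    have hcomb : tor ((n:ℤ)+3*k+ε)
        = ∑ k' ∈ Icc 1 m,
            ((if 1 ≤ ((n:ℤ)+3*(k':ℤ)-1) - ((n:ℤ)+3*k+ε) ∧ ((n:ℤ)+3*(k':ℤ)-1) - ((n:ℤ)+3*k+ε) ≤ (n:ℤ)+3*m
              then ((n:ℤ)+3*(k':ℤ)-1) - ((n:ℤ)+3*k+ε) else 0)
            - (if 1 ≤ ((n:ℤ)+3*(k':ℤ)-2) - ((n:ℤ)+3*k+ε) ∧ ((n:ℤ)+3*(k':ℤ)-2) - ((n:ℤ)+3*k+ε) ≤ (n:ℤ)+3*m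
              then ((n:ℤ)+3*(k':ℤ)-2) - ((n:ℤ)+3*k+ε) else 0)) := by
      rw [key, hS1, Finset.sum_sub_distrib]
      ring
    have hterm : ∀ k' ∈ Icc 1 m,
        ((if 1 ≤ ((n:ℤ)+3*(k':ℤ)-1) - ((n:ℤ)+3*k+ε) ∧ ((n:ℤ)+3*(k':ℤ)-1) - ((n:ℤ)+3*k+ε) ≤ (n:ℤ)+3*m
            then ((n:ℤ)+3*(k':ℤ)-1) - ((n:ℤ)+3*k+ε) else 0)
          - (if 1 ≤ ((n:ℤ)+3*(k':ℤ)-2) - ((n:ℤ)+3*k+ε) ∧ ((n:ℤ)+3*(k':ℤ)-2) - ((n:ℤ)+3*k+ε) ≤ (n:ℤ)+3*m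
            then ((n:ℤ)+3*(k':ℤ)-2) - ((n:ℤ)+3*k+ε) else 0))
        = if k + 1 ≤ (k':ℤ) then (1:ℤ) else 0 := by
      intro k' hk'
      simp only [mem_Icc] at hk'
      rcases hε' with h|h|h <;> subst h <;> split_ifs <;> omega
    rw [hcomb, Finset.sum_congr rfl hterm, indsum m k hk0 hk1]
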